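/- Let d, τ, r^{-1} > 0 be fixed. On the set of m > 0 where 4mτr^{-1} > (m − dτ)^2, the function m ↦ (1/(d + r^{-1}))(1 + sqrt(τr^{-1}/m) · e^{−(η(m)/ω_d(m))(φ(m) + π/2)}) is strictly decreasing in m, where η/ω_d = (m + dτ)/sqrt(4mτr^{-1} − (m−dτ)^2) and φ(m) ∈ (−π/2, π/2) satisfies sin(φ) = (m − dτ)/(2 sqrt(mτr^{-1})). -/

import Mathlib

open Set Real

lemma key_ineq {s : ℝ} (h1 : -1 < s) (h2 : s < 1) :
    0 < Real.sqrt (1 - s ^ 2) + s * (Real.arcsin s + π / 2) := by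
  rcases le_or_gt 0 s with hs | hs
  · have h0 : 0 < Real.sqrt (1 - s ^ 2) := Real.sqrt_pos.2 (by nlinarith)
    have h3 : 0 ≤ Real.arcsin s + π / 2 := by
      have := Real.neg_pi_div_two_le_arcsin s; linarith
    nlinarith [mul_nonneg hs h3]
  · set x := Real.arcsin s + π / 2 with hx
    have hφ1 : -(π/2) < Real.arcsin s := Real.neg_pi_div_two_lt_arcsin.2 h1
    have hφ2 : Real.arcsin s < 0 := Real.arcsin_lt_zero.2 hs
    have hx1 : 0 < x := by simp only [hx]; linarith
    have hx2 : x < π / 2 := by simp only [hx]; linarith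
    have hcos : Real.cos x > 0 := Real.cos_pos_of_mem_Ioo ⟨by linarith, hx2⟩
    have htan := Real.lt_tan hx1 hx2
    rw [Real.tan_eq_sin_div_cos, lt_div_iff₀ hcos] at htan
    have hsin : Real.sin x = Real.sqrt (1 - s ^ 2) := by
      rw [hx, Real.sin_add, Real.sin_pi_div_two, Real.cos_pi_div_two, Real.cos_arcsin]
      ring
    have hcosx : Real.cos x = -s := by
      rw [hx, Real.cos_add, Real.sin_pi_div_two, Real.cos_pi_div_two,
        Real.sin_arcsin h1.le h2.le]
      ring
    nlinarith [htan, hsin, hcosx]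

lemma core (d τ rinv m : ℝ) (hd : 0 < d) (hτ : 0 < τ) (hr : 0 < rinv)
    (hm0 : 0 < m) (hm2 : (m - d * τ) ^ 2 < 4 * m * τ * rinv) :
    ∃ V, V < 0 ∧ HasDerivAt (fun x : ℝ => (1 / (d + rinv)) *
        (1 + Real.sqrt (τ * rinv / x) *
          Real.exp (-((x + d * τ) / Real.sqrt (4 * x * τ * rinv - (x - d * τ) ^ 2)) *
            (Real.arcsin ((x - d * τ) / (2 * Real.sqrt (x * τ * rinv))) + π / 2)))) V m := by
  have hP : 0 < Real.sqrt (m * τ * rinv) := Real.sqrt_pos.2 (by positivity)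
  have hQ : 0 < Real.sqrt (4 * m * τ * rinv - (m - d * τ) ^ 2) := Real.sqrt_pos.2 (by linarith)
  have hR : 0 < Real.sqrt (τ * rinv / m) := Real.sqrt_pos.2 (by positivity)
  have hP2 : Real.sqrt (m * τ * rinv) ^ 2 = m * τ * rinv := Real.sq_sqrt (by positivity)
  have hQ2 : Real.sqrt (4 * m * τ * rinv - (m - d * τ) ^ 2) ^ 2
      = 4 * m * τ * rinv - (m - d * τ) ^ 2 := Real.sq_sqrt (by linarith)
  have hR2 : Real.sqrt (τ * rinv / m) ^ 2 = τ * rinv / m := Real.sq_sqrt (by positivity)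
  set P := Real.sqrt (m * τ * rinv) with hPdef
  set Q := Real.sqrt (4 * m * τ * rinv - (m - d * τ) ^ 2) with hQdef
  set R := Real.sqrt (τ * rinv / m) with hRdef
  set s := (m - d * τ) / (2 * P) with hsdef
  have hs2 : s ^ 2 < 1 := by
    rw [hsdef, div_pow, div_lt_one (by positivity)]
    nlinarith [hP2]
  have hs1 : -1 < s := by nlinarith [hs2, sq_nonneg (s + 1)]
  have hs1' : s < 1 := by nlinarith [hs2, sq_nonneg (s - 1)]
  have hψpos : 0 < Real.arcsin s + π / 2 := by
    have := Real.neg_pi_div_two_lt_arcsin.2 hs1; linarith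
  have hsq1 : Real.sqrt (1 - s ^ 2) = Q / (2 * P) := by
    have h1 : 1 - s ^ 2 = (Q / (2 * P)) ^ 2 := by
      rw [hsdef, div_pow, div_pow]
      field_simp
      linear_combination 4 * hP2 - hQ2
    rw [h1, Real.sqrt_sq (by positivity)]
  -- derivative of inner sqrt argument x * τ * rinv
  have hinner : HasDerivAt (fun x : ℝ => x * τ * rinv) (τ * rinv) m := by
    simpa using ((hasDerivAt_id m).mul_const τ).mul_const rinv
  have hPd : HasDerivAt (fun x : ℝ => Real.sqrt (x * τ * rinv)) (τ * rinv / (2 * P)) m :=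
    hinner.sqrt (by positivity)
  -- derivative of s(x)
  have hS : HasDerivAt (fun x : ℝ => (x - d * τ) / (2 * Real.sqrt (x * τ * rinv)))
      ((m + d * τ) / (4 * m * P)) m := by
    have h1 : HasDerivAt (fun x : ℝ => x - d * τ) 1 m := (hasDerivAt_id m).sub_const _
    have h2 : HasDerivAt (fun x : ℝ => 2 * Real.sqrt (x * τ * rinv))
        (2 * (τ * rinv / (2 * P))) m := hPd.const_mul 2
    have h3 := h1.div h2 (by positivity)
    refine h3.congr_deriv ?_
    symm
    rw [← hPdef]
    field_simp
    linear_combination (4 * d * τ - 4 * m) * hP2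
  -- derivative of arcsin(s(x)) + π/2
  have hΨ : HasDerivAt (fun x : ℝ =>
      Real.arcsin ((x - d * τ) / (2 * Real.sqrt (x * τ * rinv))) + π / 2)
      ((m + d * τ) / (2 * m * Q)) m := by
    have h1 := ((Real.hasDerivAt_arcsin hs1.ne' hs1'.ne).comp m hS).add_const (π / 2)
    refine h1.congr_deriv ?_
    symm
    rw [hsq1]
    field_simp
    ring
  -- derivative of D(x)
  have hDd : HasDerivAt (fun x : ℝ => 4 * x * τ * rinv - (x - d * τ) ^ 2)
      (4 * τ * rinv - 2 * (m - d * τ)) m := by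
    have h1 : HasDerivAt (fun x : ℝ => 4 * x * τ * rinv) (4 * τ * rinv) m := by
      simpa using (((hasDerivAt_id m).const_mul 4).mul_const τ).mul_const rinv
    have h2 : HasDerivAt (fun x : ℝ => (x - d * τ) ^ 2) (2 * (m - d * τ)) m := by
      simpa using ((hasDerivAt_id m).sub_const (d * τ)).fun_pow 2
    exact h1.sub h2
  have hQd : HasDerivAt (fun x : ℝ => Real.sqrt (4 * x * τ * rinv - (x - d * τ) ^ 2))
      ((4 * τ * rinv - 2 * (m - d * τ)) / (2 * Q)) m :=
    hDd.sqrt (ne_of_gt (by linarith : (0:ℝ) < 4 * m * τ * rinv - (m - d * τ) ^ 2))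
  -- derivative of H(x)
  have hH : HasDerivAt (fun x : ℝ =>
      (x + d * τ) / Real.sqrt (4 * x * τ * rinv - (x - d * τ) ^ 2))
      (2 * (m - d * τ) * (d * τ + τ * rinv) / Q ^ 3) m := by
    have h1 : HasDerivAt (fun x : ℝ => x + d * τ) 1 m := (hasDerivAt_id m).add_const _
    have h2 := h1.div hQd (ne_of_gt hQ)
    refine h2.congr_deriv ?_
    symm
    rw [← hQdef]
    field_simp
    linear_combination (-2) * hQ2
  -- derivative of E(x)
  have hE : HasDerivAt (fun x : ℝ =>
      -((x + d * τ) / Real.sqrt (4 * x * τ * rinv - (x - d * τ) ^ 2)) *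
        (Real.arcsin ((x - d * τ) / (2 * Real.sqrt (x * τ * rinv))) + π / 2))
      (-(2 * (m - d * τ) * (d * τ + τ * rinv) / Q ^ 3) * (Real.arcsin s + π / 2)
        + -((m + d * τ) / Q) * ((m + d * τ) / (2 * m * Q))) m := hH.neg.mul hΨ
  have hA : HasDerivAt (fun x : ℝ => Real.sqrt (τ * rinv / x)) (-(R / (2 * m))) m := by
    have h1 : HasDerivAt (fun x : ℝ => τ * rinv / x) (-(τ * rinv) / m ^ 2) m := by
      simpa using (hasDerivAt_const m (τ * rinv)).fun_div (hasDerivAt_id m) (ne_of_gt hm0)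
    have h2 := h1.sqrt (by positivity)
    convert h2 using 1
    rw [← hRdef]
    have hR2' : R ^ 2 * m = τ * rinv := by rw [hR2]; field_simp
    field_simp
    linear_combination (-1) * hR2'
  set K := Real.exp (-((m + d * τ) / Q) * (Real.arcsin s + π / 2)) with hKdef
  have hKpos : 0 < K := Real.exp_pos _
  have hg := hA.mul hE.exp
  have hf := (hg.const_add 1).const_mul (1 / (d + rinv))
  refine ⟨_, ?_, hf⟩
  rw [← hPdef, ← hQdef, ← hRdef, ← hsdef, ← hKdef]
  have hkey : 0 < Q + (m - d * τ) * (Real.arcsin s + π / 2) := by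
    have h := key_ineq hs1 hs1'
    rw [hsq1] at h
    have hms : m - d * τ = 2 * P * s := by rw [hsdef]; field_simp
    have e : Q + 2 * P * s * (Real.arcsin s + π / 2)
        = 2 * P * (Q / (2 * P) + s * (Real.arcsin s + π / 2)) := by
      field_simp
    rw [hms, e]
    exact mul_pos (by positivity) h
  have hfin : (-(R / (2 * m)) * K +
      R * (K * (-(2 * (m - d * τ) * (d * τ + τ * rinv) / Q ^ 3) * (Real.arcsin s + π / 2) +
        -((m + d * τ) / Q) * ((m + d * τ) / (2 * m * Q)))))
      = -(K * R * (2 * (d * τ + τ * rinv) / Q ^ 3))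
          * (Q + (m - d * τ) * (Real.arcsin s + π / 2)) := by
    field_simp
    linear_combination (-Q) * hQ2
  rw [hfin]
  apply mul_neg_of_pos_of_neg (by positivity)
  exact mul_neg_of_neg_of_pos (neg_lt_zero.2 (by positivity)) hkey

theorem stmt12 (d τ rinv : ℝ) (hd : 0 < d) (hτ : 0 < τ) (hr : 0 < rinv) :
    StrictAntiOn
      (fun m : ℝ => (1 / (d + rinv)) *
        (1 + Real.sqrt (τ * rinv / m) *
          Real.exp (-((m + d * τ) / Real.sqrt (4 * m * τ * rinv - (m - d * τ) ^ 2)) *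
            (Real.arcsin ((m - d * τ) / (2 * Real.sqrt (m * τ * rinv))) + π / 2))))
      {m : ℝ | 0 < m ∧ 4 * m * τ * rinv > (m - d * τ) ^ 2} := by
  have hconv : Convex ℝ {m : ℝ | 0 < m ∧ 4 * m * τ * rinv > (m - d * τ) ^ 2} := by
    intro x hx y hy α β hα hβ hαβ
    simp only [Set.mem_setOf_eq] at hx hy ⊢
    obtain ⟨hx1, hx2⟩ := hx; obtain ⟨hy1, hy2⟩ := hy
    constructor
    · simp only [smul_eq_mul]
      rcases hα.lt_or_eq with h | h
      · nlinarith [mul_pos h hx1, mul_nonneg hβ hy1.le]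
      · have : β = 1 := by linarith
        nlinarith
    · simp only [smul_eq_mul]
      have hcomb : 0 < α * (4 * x * τ * rinv - (x - d * τ) ^ 2)
          + β * (4 * y * τ * rinv - (y - d * τ) ^ 2) := by
        rcases hα.lt_or_eq with h | h
        · nlinarith [mul_pos h (show (0:ℝ) < 4 * x * τ * rinv - (x - d * τ) ^ 2 by linarith),
            mul_nonneg hβ (show (0:ℝ) ≤ 4 * y * τ * rinv - (y - d * τ) ^ 2 by linarith)]
        · have : β = 1 := by linarith
          nlinarith
      have hβ' : β = 1 - α := by linarith
      have hid : 4 * (α * x + β * y) * τ * rinv - (α * x + β * y - d * τ) ^ 2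
          = α * (4 * x * τ * rinv - (x - d * τ) ^ 2)
            + β * (4 * y * τ * rinv - (y - d * τ) ^ 2) + α * β * (x - y) ^ 2 := by
        subst hβ'; ring
      nlinarith [hcomb, mul_nonneg (mul_nonneg hα hβ) (sq_nonneg (x - y)), hid]
  have hopen : IsOpen {m : ℝ | 0 < m ∧ 4 * m * τ * rinv > (m - d * τ) ^ 2} := by
    have : {m : ℝ | 0 < m ∧ 4 * m * τ * rinv > (m - d * τ) ^ 2}
        = {m : ℝ | 0 < m} ∩ {m : ℝ | (m - d * τ) ^ 2 < 4 * m * τ * rinv} := by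
      ext m; simp only [Set.mem_setOf_eq, Set.mem_inter_iff, gt_iff_lt]
    rw [this]
    exact (isOpen_lt continuous_const continuous_id).inter
      (isOpen_lt (by continuity) (by continuity))
  -- main derivative fact
  have hder : ∀ m ∈ {m : ℝ | 0 < m ∧ 4 * m * τ * rinv > (m - d * τ) ^ 2},
      HasDerivAt (fun m : ℝ => (1 / (d + rinv)) *
        (1 + Real.sqrt (τ * rinv / m) *
          Real.exp (-((m + d * τ) / Real.sqrt (4 * m * τ * rinv - (m - d * τ) ^ 2)) *
            (Real.arcsin ((m - d * τ) / (2 * Real.sqrt (m * τ * rinv))) + π / 2))))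
        (deriv (fun m : ℝ => (1 / (d + rinv)) *
        (1 + Real.sqrt (τ * rinv / m) *
          Real.exp (-((m + d * τ) / Real.sqrt (4 * m * τ * rinv - (m - d * τ) ^ 2)) *
            (Real.arcsin ((m - d * τ) / (2 * Real.sqrt (m * τ * rinv))) + π / 2)))) m) m
      ∧ deriv (fun m : ℝ => (1 / (d + rinv)) *
        (1 + Real.sqrt (τ * rinv / m) *
          Real.exp (-((m + d * τ) / Real.sqrt (4 * m * τ * rinv - (m - d * τ) ^ 2)) *
            (Real.arcsin ((m - d * τ) / (2 * Real.sqrt (m * τ * rinv))) + π / 2)))) m < 0 := by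
    intro m hm
    simp only [Set.mem_setOf_eq, gt_iff_lt] at hm
    obtain ⟨V, hV, hf⟩ := core d τ rinv m hd hτ hr hm.1 hm.2
    constructor
    · rw [hf.deriv]; exact hf
    · rw [hf.deriv]; exact hV
  apply strictAntiOn_of_deriv_neg hconv
  · intro m hm
    exact ((hder m hm).1.continuousAt).continuousWithinAt
  · intro m hm
    rw [hopen.interior_eq] at hm
    exact (hder m hm).2
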